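/- arXiv:2003.04652 — 2 statements merged into one kernel-verified Lean document; each statement's English description precedes it below -/
import Mathlib

section
/- Let n ≥ 2 and, for i = 1, 2, let Li be a solvable real Lie algebra with dim Li = n + 2 whose derived algebra Hi := [Li, Li] is nilpotent of dimension n, and let zi, yi ∈ Li be such that Li = ℝzi ⊕ ℝyi ⊕ Hi as vector spaces and [yi, x] = 0 for all x ∈ Hi. Set Ki := ℝyi ⊕ Hi (a Lie ideal of Li of codimension 1). Then L1 and L2 are isomorphic as Lie algebras if and only if there exist a Lie algebra isomorphism σ : K1 → K2, a scalar α ∈ ℝ ∖ {0}, and an element v ∈ K2 such that σ([z1, x]) = α·[z2, σ(x)] + [v, σ(x)] for all x ∈ K1. -/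
open Module LieAlgebra

-- codim of derived algebra of a nilpotent Lie algebra is ≥ 2 (when dim ≥ 2)
theorem nilp_derived_codim (H : Type) [LieRing H] [LieAlgebra ℝ H]
    [FiniteDimensional ℝ H] [LieModule.IsNilpotent H H]
    (hn : 2 ≤ finrank ℝ H) :
    finrank ℝ (LieAlgebra.derivedSeries ℝ H 1).toSubmodule + 2 ≤ finrank ℝ H := by
  set D := LieAlgebra.derivedSeries ℝ H 1 with hD
  have : Nontrivial H := Module.nontrivial_of_finrank_pos (R := ℝ) (lt_of_lt_of_le two_pos hn)
  have hsolv : LieAlgebra.IsSolvable H := inferInstance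
  have hlt : D < ⊤ := LieAlgebra.derivedSeries_lt_top_of_solvable ℝ H
  have hltS : D.toSubmodule < ⊤ := by
    rcases lt_iff_le_and_ne.mp hlt with ⟨h1, h2⟩
    refine lt_iff_le_and_ne.mpr ⟨le_top, fun hc => h2 ?_⟩
    rw [← LieSubmodule.toSubmodule_inj] at *
    simpa using hc
  have hdlt : finrank ℝ D.toSubmodule < finrank ℝ H := Submodule.finrank_lt hltS.ne
  by_contra hcon
  push_neg at hcon
  -- so finrank D = finrank H - 1
  obtain ⟨x, -, hx⟩ : ∃ x ∈ (⊤ : Submodule ℝ H), x ∉ D.toSubmodule := SetLike.exists_of_lt hltS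
  have hx0 : x ≠ 0 := fun h => hx (h ▸ Submodule.zero_mem _)
  have hinf : Submodule.span ℝ {x} ⊓ D.toSubmodule = ⊥ := by
    rw [eq_bot_iff]
    rintro a ⟨ha1, ha2⟩
    rcases Submodule.mem_span_singleton.mp ha1 with ⟨c, rfl⟩
    rcases eq_or_ne c 0 with rfl | hc
    · simp
    · have h2 := D.toSubmodule.smul_mem c⁻¹ ha2
      rw [smul_smul, inv_mul_cancel₀ hc, one_smul] at h2
      exact absurd h2 hx
  have hsup : Submodule.span ℝ {x} ⊔ D.toSubmodule = ⊤ := by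
    apply Submodule.eq_top_of_finrank_eq
    have := Submodule.finrank_sup_add_finrank_inf_eq (Submodule.span ℝ {x}) D.toSubmodule
    rw [hinf] at this
    simp only [finrank_bot, add_zero] at this
    rw [finrank_span_singleton hx0] at this
    have hle : finrank ℝ ↥(Submodule.span ℝ {x} ⊔ D.toSubmodule) ≤ finrank ℝ H :=
      Submodule.finrank_le _
    omega
  -- decomposition
  have hdecomp : ∀ h : H, ∃ c : ℝ, ∃ d ∈ D, h = c • x + d := by
    intro h
    have : h ∈ Submodule.span ℝ {x} ⊔ D.toSubmodule := hsup ▸ Submodule.mem_top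
    rcases Submodule.mem_sup.mp this with ⟨a, ha, d, hd, rfl⟩
    rcases Submodule.mem_span_singleton.mp ha with ⟨c, rfl⟩
    exact ⟨c, d, hd, rfl⟩
  -- D ≤ ⁅⊤, D⁆
  have hkey : ∀ (N : LieIdeal ℝ H), D ≤ N → D ≤ ⁅(⊤ : LieIdeal ℝ H), N⁆ := by
    intro N hN
    have hDeq : D = ⁅(⊤ : LieIdeal ℝ H), (⊤ : LieIdeal ℝ H)⁆ := by
      rw [hD]
      simp [LieAlgebra.derivedSeries_def]
    rw [hDeq, LieSubmodule.lieIdeal_oper_eq_span, LieSubmodule.lieSpan_le]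
    rintro m ⟨⟨p, -⟩, ⟨q, -⟩, rfl⟩
    rw [SetLike.mem_coe]
    rcases hdecomp p with ⟨c, d, hd, rfl⟩
    rcases hdecomp q with ⟨c', d', hd', rfl⟩
    have e1 : ⁅c • x + d, c' • x + d'⁆
        = (c' * c) • ⁅x, x⁆ + c • ⁅x, d'⁆ + (c' • ⁅d, x⁆ + ⁅d, d'⁆) := by
      simp only [lie_add, add_lie, smul_lie, lie_smul, smul_smul, smul_add]
      abel
    rw [e1, lie_self, smul_zero, zero_add]
    have m1 : ⁅x, d'⁆ ∈ ⁅(⊤ : LieIdeal ℝ H), N⁆ :=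
      LieSubmodule.lie_mem_lie trivial (hN hd')
    have m2 : ⁅x, d⁆ ∈ ⁅(⊤ : LieIdeal ℝ H), N⁆ :=
      LieSubmodule.lie_mem_lie trivial (hN hd)
    have m2' : ⁅d, x⁆ ∈ ⁅(⊤ : LieIdeal ℝ H), N⁆ := by
      rw [← lie_skew]; exact neg_mem m2
    have m3 : ⁅d, d'⁆ ∈ ⁅(⊤ : LieIdeal ℝ H), N⁆ :=
      LieSubmodule.lie_mem_lie trivial (hN hd')
    exact add_mem (Submodule.smul_mem _ _ m1) (add_mem (Submodule.smul_mem _ _ m2') m3)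
  have hlcs : ∀ k, D ≤ LieModule.lowerCentralSeries ℝ H H k := by
    intro k
    induction k with
    | zero => exact le_top
    | succ k ih =>
      rw [LieModule.lowerCentralSeries_succ]
      exact hkey _ ih
  obtain ⟨k, hk⟩ := LieModule.IsNilpotent.nilpotent ℝ H H
  have hDbot : D = ⊥ := le_bot_iff.mp (hk ▸ hlcs k)
  rw [hDbot] at hcon
  simp only [LieSubmodule.bot_toSubmodule, finrank_bot] at hcon
  omega

theorem centralizer_le (n : ℕ) (hn : 2 ≤ n) (L : Type) [LieRing L] [LieAlgebra ℝ L]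
    [FiniteDimensional ℝ L]
    (H : LieIdeal ℝ L) (hH : H = LieAlgebra.derivedSeries ℝ L 1)
    (hnil : LieModule.IsNilpotent ↥H ↥H) (hHdim : Module.finrank ℝ ↥H = n)
    (z y : L)
    (hsup : Submodule.span ℝ {z} ⊔ Submodule.span ℝ {y} ⊔ H.toSubmodule = ⊤)
    (hy : ∀ x ∈ H, ⁅y, x⁆ = 0)
    (K : LieIdeal ℝ L) (hK : K.toSubmodule = Submodule.span ℝ {y} ⊔ H.toSubmodule)
    (x : L) (hx : ∀ h ∈ H, ⁅x, h⁆ = 0) : x ∈ K := by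
  -- decompose x = a • z + w with w ∈ K
  have hxT : x ∈ Submodule.span ℝ {z} ⊔ (Submodule.span ℝ {y} ⊔ H.toSubmodule) := by
    rw [← sup_assoc, hsup]; exact Submodule.mem_top
  rcases Submodule.mem_sup.mp hxT with ⟨u, hu, w, hw, rfl⟩
  rcases Submodule.mem_span_singleton.mp hu with ⟨a, rfl⟩
  rcases eq_or_ne a 0 with rfl | ha
  · rw [zero_smul, zero_add]; rw [← hK] at hw; exact hw
  exfalso
  -- D' = ⁅H, H⁆ as an ideal of L
  set D' : LieIdeal ℝ L := ⁅H, H⁆ with hD'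
  -- every ⁅z, h⁆ for h ∈ H lies in D'
  have hzH : ∀ h ∈ H, ⁅z, h⁆ ∈ D'.toSubmodule := by
    intro h hh
    rcases Submodule.mem_sup.mp hw with ⟨u', hu', h₀, hh₀, rfl⟩
    rcases Submodule.mem_span_singleton.mp hu' with ⟨b, rfl⟩
    have h1 : a • ⁅z, h⁆ + (b • ⁅y, h⁆ + ⁅h₀, h⁆) = 0 := by
      have := hx h hh
      rw [add_lie, smul_lie, add_lie, smul_lie] at this
      simpa using this
    rw [hy h hh, smul_zero, zero_add] at h1
    have h2 : ⁅z, h⁆ = (-a⁻¹) • ⁅h₀, h⁆ := by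
      have : a • ⁅z, h⁆ = -⁅h₀, h⁆ := by linear_combination (norm := module) h1
      calc ⁅z, h⁆ = a⁻¹ • (a • ⁅z, h⁆) := by rw [smul_smul, inv_mul_cancel₀ ha, one_smul]
        _ = (-a⁻¹) • ⁅h₀, h⁆ := by rw [this]; module
    rw [h2]
    exact Submodule.smul_mem _ _ (LieSubmodule.lie_mem_lie hh₀ hh)
  -- H ≤ span{⁅z,y⁆} ⊔ D'
  set S : Submodule ℝ L := Submodule.span ℝ {⁅z, y⁆} ⊔ D'.toSubmodule with hS
  have hdec : ∀ u : L, ∃ a b : ℝ, ∃ h ∈ H, u = a • z + (b • y + h) := by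
    intro u
    have huT : u ∈ Submodule.span ℝ {z} ⊔ (Submodule.span ℝ {y} ⊔ H.toSubmodule) := by
      rw [← sup_assoc, hsup]; exact Submodule.mem_top
    rcases Submodule.mem_sup.mp huT with ⟨u1, hu1, w1, hw1, rfl⟩
    rcases Submodule.mem_span_singleton.mp hu1 with ⟨c, rfl⟩
    rcases Submodule.mem_sup.mp hw1 with ⟨u2, hu2, h2, hh2, rfl⟩
    rcases Submodule.mem_span_singleton.mp hu2 with ⟨b, rfl⟩
    exact ⟨c, b, h2, hh2, rfl⟩
  have hHS : H.toSubmodule ≤ S := by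
    have hHeq : H = ⁅(⊤ : LieIdeal ℝ L), (⊤ : LieIdeal ℝ L)⁆ := by
      rw [hH]; simp [LieAlgebra.derivedSeries_def]
    have hHsub : H.toSubmodule = Submodule.span ℝ
        {m | ∃ p ∈ (⊤ : LieIdeal ℝ L), ∃ q ∈ (⊤ : LieIdeal ℝ L), ⁅p, q⁆ = m} := by
      rw [hHeq]; exact LieSubmodule.lieIdeal_oper_eq_linear_span' _ _
    rw [hHsub, Submodule.span_le]
    rintro m ⟨p, -, q, -, rfl⟩
    rcases hdec p with ⟨a₁, b₁, h₁, hh₁, rfl⟩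
    rcases hdec q with ⟨a₂, b₂, h₂, hh₂, rfl⟩
    have e1 : ⁅a₁ • z + (b₁ • y + h₁), a₂ • z + (b₂ • y + h₂)⁆ =
        (a₁ * a₂) • ⁅z, z⁆ + (a₁ * b₂) • ⁅z, y⁆ + a₁ • ⁅z, h₂⁆ +
          ((b₁ * a₂) • ⁅y, z⁆ + (b₁ * b₂) • ⁅y, y⁆ + b₁ • ⁅y, h₂⁆) +
          (a₂ • ⁅h₁, z⁆ + b₂ • ⁅h₁, y⁆ + ⁅h₁, h₂⁆) := by
      simp only [add_lie, lie_add, smul_lie, lie_smul, smul_add, smul_smul]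
      module
    rw [SetLike.mem_coe, e1, lie_self, lie_self, hy h₂ hh₂, smul_zero, smul_zero, smul_zero,
      add_zero, add_zero, zero_add]
    have mzy : ⁅z, y⁆ ∈ S := le_sup_left (α := Submodule ℝ L) (Submodule.mem_span_singleton_self _)
    have myz : ⁅y, z⁆ ∈ S := by rw [← lie_skew]; exact neg_mem mzy
    have mzh₂ : ⁅z, h₂⁆ ∈ S := le_sup_right (α := Submodule ℝ L) (hzH h₂ hh₂)
    have mh₁z : ⁅h₁, z⁆ ∈ S := by
      rw [← lie_skew]; exact neg_mem (le_sup_right (α := Submodule ℝ L) (hzH h₁ hh₁))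
    have mh₁y : ⁅h₁, y⁆ ∈ S := by
      rw [← lie_skew, hy h₁ hh₁, neg_zero]; exact zero_mem S
    have mhh : ⁅h₁, h₂⁆ ∈ S :=
      le_sup_right (α := Submodule ℝ L) (LieSubmodule.lie_mem_lie hh₁ hh₂)
    exact add_mem (add_mem (add_mem (Submodule.smul_mem _ _ mzy) (Submodule.smul_mem _ _ mzh₂))
      (Submodule.smul_mem _ _ myz)) (add_mem (add_mem (Submodule.smul_mem _ _ mh₁z)
      (Submodule.smul_mem _ _ mh₁y)) mhh)
  -- dimension count
  have hfinD : finrank ℝ D'.toSubmodule + 2 ≤ n := by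
    have hn2 : 2 ≤ finrank ℝ ↥H := hHdim ▸ hn
    have hcodim := nilp_derived_codim ↥H hn2
    rw [hHdim] at hcodim
    have hle : D'.toSubmodule ≤
        Submodule.map (H.toSubmodule.subtype) (LieAlgebra.derivedSeries ℝ ↥H 1).toSubmodule := by
      have hD'sub : D'.toSubmodule = Submodule.span ℝ
          {m | ∃ p ∈ H, ∃ q ∈ H, ⁅p, q⁆ = m} :=
        LieSubmodule.lieIdeal_oper_eq_linear_span' _ _
      rw [hD'sub, Submodule.span_le]
      rintro m ⟨p, hp, q, hq, rfl⟩
      have hmem : ⁅(⟨p, hp⟩ : ↥H), (⟨q, hq⟩ : ↥H)⁆ ∈ LieAlgebra.derivedSeries ℝ ↥H 1 := by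
        have : LieAlgebra.derivedSeries ℝ ↥H 1
            = ⁅(⊤ : LieIdeal ℝ ↥H), (⊤ : LieIdeal ℝ ↥H)⁆ := by
          simp [LieAlgebra.derivedSeries_def]
        rw [this]
        exact LieSubmodule.lie_mem_lie trivial trivial
      exact ⟨⁅(⟨p, hp⟩ : ↥H), (⟨q, hq⟩ : ↥H)⁆, hmem, rfl⟩
    have hdd := Submodule.finrank_map_le H.toSubmodule.subtype
      (LieAlgebra.derivedSeries ℝ ↥H 1).toSubmodule
    exact le_trans (Nat.add_le_add_right ((Submodule.finrank_mono hle).trans hdd) 2) hcodim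
  have h1 : finrank ℝ S ≤ 1 + finrank ℝ D'.toSubmodule := by
    have := Submodule.finrank_sup_add_finrank_inf_eq (Submodule.span ℝ {⁅z, y⁆}) D'.toSubmodule
    have h2 : finrank ℝ (Submodule.span ℝ ({⁅z, y⁆} : Set L)) ≤ 1 :=
      finrank_span_le_card _ |>.trans (by simp)
    rw [← hS] at this
    omega
  have h3 : n ≤ finrank ℝ S := by
    have h4 : finrank ℝ H.toSubmodule ≤ finrank ℝ S := Submodule.finrank_mono hHS
    have h5 : finrank ℝ H.toSubmodule = n := hHdim
    omega
  omega


theorem z_notin_K (n : ℕ) (L : Type) [LieRing L] [LieAlgebra ℝ L] [FiniteDimensional ℝ L]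
    (hdim : Module.finrank ℝ L = n + 2) (H : LieIdeal ℝ L)
    (hHdim : Module.finrank ℝ ↥H = n) (z y : L)
    (hsup : Submodule.span ℝ {z} ⊔ Submodule.span ℝ {y} ⊔ H.toSubmodule = ⊤)
    (hzind : Submodule.span ℝ {z} ⊓ (Submodule.span ℝ {y} ⊔ H.toSubmodule) = ⊥)
    (K : LieIdeal ℝ L) (hK : K.toSubmodule = Submodule.span ℝ {y} ⊔ H.toSubmodule) :
    z ∉ K := by
  intro h
  have hz0 : z = 0 := by
    have : z ∈ Submodule.span ℝ {z} ⊓ (Submodule.span ℝ {y} ⊔ H.toSubmodule) :=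
      ⟨Submodule.mem_span_singleton_self _, hK ▸ h⟩
    rw [hzind] at this
    simpa using this
  rw [hz0, Submodule.span_zero_singleton, bot_sup_eq] at hsup
  have h1 := Submodule.finrank_sup_add_finrank_inf_eq (Submodule.span ℝ {y}) H.toSubmodule
  rw [hsup] at h1
  have h2 : finrank ℝ (Submodule.span ℝ ({y} : Set L)) ≤ 1 :=
    (finrank_span_le_card _).trans (by simp)
  have h3 : finrank ℝ (⊤ : Submodule ℝ L) = n + 2 := by rw [finrank_top, hdim]
  have h4 : finrank ℝ H.toSubmodule = n := hHdim
  omega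

/-- For `i = 1, 2`, let `Lᵢ` be a solvable real Lie algebra of dimension `n + 2` (`n ≥ 2`)
whose derived algebra `Hᵢ := [Lᵢ,Lᵢ]` is nilpotent of dimension `n`, with `zᵢ, yᵢ ∈ Lᵢ`
such that `Lᵢ = ℝzᵢ ⊕ ℝyᵢ ⊕ Hᵢ` as vector spaces and `⁅yᵢ, Hᵢ⁆ = 0`; set
`Kᵢ := ℝyᵢ ⊕ Hᵢ` (a codimension-one Lie ideal). Then `L₁ ≅ L₂` iff there are a Lie
algebra isomorphism `σ : K₁ → K₂`, a nonzero scalar `α` and `v ∈ K₂` such that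
`σ ⁅z₁, x⁆ = α • ⁅z₂, σ x⁆ + ⁅v, σ x⁆` for all `x ∈ K₁`. -/
theorem stmt18 (n : ℕ) (hn : 2 ≤ n)
    (L₁ : Type) [LieRing L₁] [LieAlgebra ℝ L₁] [FiniteDimensional ℝ L₁]
    [LieAlgebra.IsSolvable L₁]
    (L₂ : Type) [LieRing L₂] [LieAlgebra ℝ L₂] [FiniteDimensional ℝ L₂]
    [LieAlgebra.IsSolvable L₂]
    (hdim₁ : Module.finrank ℝ L₁ = n + 2) (hdim₂ : Module.finrank ℝ L₂ = n + 2)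
    (H₁ : LieIdeal ℝ L₁) (hH₁ : H₁ = LieAlgebra.derivedSeries ℝ L₁ 1)
    (H₂ : LieIdeal ℝ L₂) (hH₂ : H₂ = LieAlgebra.derivedSeries ℝ L₂ 1)
    (hnil₁ : LieModule.IsNilpotent ↥H₁ ↥H₁) (hnil₂ : LieModule.IsNilpotent ↥H₂ ↥H₂)
    (hHdim₁ : Module.finrank ℝ ↥H₁ = n) (hHdim₂ : Module.finrank ℝ ↥H₂ = n)
    (z₁ y₁ : L₁) (z₂ y₂ : L₂)
    (hsup₁ : Submodule.span ℝ {z₁} ⊔ Submodule.span ℝ {y₁} ⊔ H₁.toSubmodule = ⊤)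
    (hzind₁ : Submodule.span ℝ {z₁} ⊓ (Submodule.span ℝ {y₁} ⊔ H₁.toSubmodule) = ⊥)
    (hyind₁ : Submodule.span ℝ {y₁} ⊓ H₁.toSubmodule = ⊥)
    (hsup₂ : Submodule.span ℝ {z₂} ⊔ Submodule.span ℝ {y₂} ⊔ H₂.toSubmodule = ⊤)
    (hzind₂ : Submodule.span ℝ {z₂} ⊓ (Submodule.span ℝ {y₂} ⊔ H₂.toSubmodule) = ⊥)
    (hyind₂ : Submodule.span ℝ {y₂} ⊓ H₂.toSubmodule = ⊥)
    (hy₁ : ∀ x ∈ H₁, ⁅y₁, x⁆ = 0) (hy₂ : ∀ x ∈ H₂, ⁅y₂, x⁆ = 0)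
    (K₁ : LieIdeal ℝ L₁) (hK₁ : K₁.toSubmodule = Submodule.span ℝ {y₁} ⊔ H₁.toSubmodule)
    (K₂ : LieIdeal ℝ L₂) (hK₂ : K₂.toSubmodule = Submodule.span ℝ {y₂} ⊔ H₂.toSubmodule) :
    Nonempty (L₁ ≃ₗ⁅ℝ⁆ L₂) ↔
      ∃ (σ : ↥K₁ ≃ₗ⁅ℝ⁆ ↥K₂) (α : ℝ) (v : ↥K₂), α ≠ 0 ∧
        ∀ x : ↥K₁,
          ((σ ⟨⁅z₁, (x : L₁)⁆, K₁.lie_mem x.2⟩ : ↥K₂) : L₂)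
            = α • ⁅z₂, ((σ x : ↥K₂) : L₂)⁆ + ⁅((v : L₂)), ((σ x : ↥K₂) : L₂)⁆ := by
  have hzK₁ : z₁ ∉ K₁ := z_notin_K n L₁ hdim₁ H₁ hHdim₁ z₁ y₁ hsup₁ hzind₁ K₁ hK₁
  have hzK₂ : z₂ ∉ K₂ := z_notin_K n L₂ hdim₂ H₂ hHdim₂ z₂ y₂ hsup₂ hzind₂ K₂ hK₂
  have hz₁0 : z₁ ≠ 0 := fun h => hzK₁ (h ▸ K₁.zero_mem)
  have hz₂0 : z₂ ≠ 0 := fun h => hzK₂ (h ▸ K₂.zero_mem)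
  have hsupK₁ : Submodule.span ℝ {z₁} ⊔ K₁.toSubmodule = ⊤ := by
    rw [hK₁, ← sup_assoc, hsup₁]
  have hsupK₂ : Submodule.span ℝ {z₂} ⊔ K₂.toSubmodule = ⊤ := by
    rw [hK₂, ← sup_assoc, hsup₂]
  have hinfK₁ : Submodule.span ℝ {z₁} ⊓ K₁.toSubmodule = ⊥ := by rw [hK₁]; exact hzind₁
  have hinfK₂ : Submodule.span ℝ {z₂} ⊓ K₂.toSubmodule = ⊥ := by rw [hK₂]; exact hzind₂
  have hHK₁ : H₁.toSubmodule ≤ K₁.toSubmodule := by rw [hK₁]; exact le_sup_right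
  have hHK₂ : H₂.toSubmodule ≤ K₂.toSubmodule := by rw [hK₂]; exact le_sup_right
  constructor
  · rintro ⟨e⟩
    have hes : Function.Surjective (e.toLieHom : L₁ →ₗ⁅ℝ⁆ L₂) := e.surjective
    have hH₁₂ : Submodule.map (e.toLieHom : L₁ →ₗ[ℝ] L₂) H₁.toSubmodule = H₂.toSubmodule := by
      rw [hH₁, hH₂, ← LieIdeal.derivedSeries_map_eq 1 hes,
        LieIdeal.coe_map_of_surjective hes]
    have hH₁₂mem : ∀ x : L₁, x ∈ H₁ → e x ∈ H₂ := by
      intro x hx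
      rw [← LieSubmodule.mem_toSubmodule, ← hH₁₂]
      exact ⟨x, hx, rfl⟩
    have hH₂₁mem : ∀ x : L₂, x ∈ H₂ → e.symm x ∈ H₁ := by
      intro x hx
      rw [← LieSubmodule.mem_toSubmodule, ← hH₁₂] at hx
      rcases hx with ⟨w, hw, hwx⟩
      have hew : e.symm x = w := by
        apply e.injective
        show e (e.symm x) = e w
        rw [LieEquiv.apply_symm_apply]
        exact hwx.symm
      rw [hew]
      exact hw
    -- e maps K₁ into K₂ and back
    have hKmem : ∀ x : L₁, x ∈ K₁ → e x ∈ K₂ := by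
      intro x hx
      rw [← LieSubmodule.mem_toSubmodule, hK₁] at hx
      rcases Submodule.mem_sup.mp hx with ⟨u, hu, h, hh, rfl⟩
      rcases Submodule.mem_span_singleton.mp hu with ⟨b, rfl⟩
      have h1 : e (b • y₁ + h) = b • e y₁ + e h := by
        simp only [← LieEquiv.coe_toLinearEquiv, map_add, map_smul]
      rw [h1]
      have hy₁K : e y₁ ∈ K₂ := by
        apply centralizer_le n hn L₂ H₂ hH₂ hnil₂ hHdim₂ z₂ y₂ hsup₂ hy₂ K₂ hK₂
        intro h' hh'
        have h2 : ⁅e y₁, h'⁆ = e ⁅y₁, e.symm h'⁆ := by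
          rw [LieEquiv.map_lie, LieEquiv.apply_symm_apply]
        rw [h2, hy₁ _ (hH₂₁mem h' hh')]
        simp only [← LieEquiv.coe_toLinearEquiv, map_zero]
      exact K₂.add_mem (K₂.smul_mem b hy₁K) (hHK₂ (hH₁₂mem h hh))
    have hKmem' : ∀ x : L₂, x ∈ K₂ → e.symm x ∈ K₁ := by
      intro x hx
      rw [← LieSubmodule.mem_toSubmodule, hK₂] at hx
      rcases Submodule.mem_sup.mp hx with ⟨u, hu, h, hh, rfl⟩
      rcases Submodule.mem_span_singleton.mp hu with ⟨b, rfl⟩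
      have h1 : e.symm (b • y₂ + h) = b • e.symm y₂ + e.symm h := by
        simp only [← LieEquiv.coe_toLinearEquiv, map_add, map_smul]
      rw [h1]
      have hy₂K : e.symm y₂ ∈ K₁ := by
        apply centralizer_le n hn L₁ H₁ hH₁ hnil₁ hHdim₁ z₁ y₁ hsup₁ hy₁ K₁ hK₁
        intro h' hh'
        apply e.injective
        show e ⁅e.symm y₂, h'⁆ = e 0
        rw [LieEquiv.map_lie, LieEquiv.apply_symm_apply, hy₂ _ (hH₁₂mem h' hh')]
        simp only [← LieEquiv.coe_toLinearEquiv, map_zero]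
      exact K₁.add_mem (K₁.smul_mem b hy₂K) (hHK₁ (hH₂₁mem h hh))
    -- construct σ
    refine ⟨{ toFun := fun a => ⟨e a, hKmem a a.2⟩,
              map_add' := by
                intro a b; ext
                simp only [← LieEquiv.coe_toLinearEquiv]
                exact e.toLinearEquiv.map_add a b,
              map_smul' := by
                intro c a; ext
                simp only [← LieEquiv.coe_toLinearEquiv]
                exact e.toLinearEquiv.map_smul c a,
              map_lie' := by intro a b; ext; exact e.map_lie _ _,
              invFun := fun b => ⟨e.symm b, hKmem' b b.2⟩,
              left_inv := by intro a; ext; exact e.symm_apply_apply a,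
              right_inv := by intro b; ext; exact e.apply_symm_apply b }, ?_⟩
    -- decompose e z₁
    have hez : e z₁ ∈ Submodule.span ℝ {z₂} ⊔ K₂.toSubmodule := by
      rw [hsupK₂]; exact Submodule.mem_top
    rcases Submodule.mem_sup.mp hez with ⟨u, hu, w, hw, hews⟩
    rcases Submodule.mem_span_singleton.mp hu with ⟨α, rfl⟩
    have hα : α ≠ 0 := by
      rintro rfl
      rw [zero_smul, zero_add] at hews
      apply hzK₁
      have hwK : e z₁ ∈ K₂ := by rw [← hews]; exact hw
      have h5 : e.symm (e z₁) ∈ K₁ := hKmem' _ hwK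
      rwa [LieEquiv.symm_apply_apply] at h5
    refine ⟨α, ⟨w, hw⟩, hα, ?_⟩
    intro x
    show e ⁅z₁, (x : L₁)⁆ = α • ⁅z₂, e (x : L₁)⁆ + ⁅w, e (x : L₁)⁆
    rw [LieEquiv.map_lie, ← hews, add_lie, smul_lie]
  · rintro ⟨σ, α, v, hα, hrel⟩
    -- the element replacing z₂
    set z₂' : L₂ := α • z₂ + ↑v with hz₂'
    have hz₂'K : z₂' ∉ K₂.toSubmodule := by
      intro hmem
      apply hzK₂
      have h1 : α • z₂ ∈ K₂.toSubmodule := by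
        have := Submodule.sub_mem _ hmem v.2
        simpa [hz₂'] using this
      have h2 : z₂ ∈ K₂.toSubmodule := by
        have := K₂.toSubmodule.smul_mem α⁻¹ h1
        rwa [smul_smul, inv_mul_cancel₀ hα, one_smul] at this
      exact h2
    have hz₂'0 : z₂' ≠ 0 := fun h => hz₂'K (h ▸ K₂.toSubmodule.zero_mem)
    -- IsCompl structures
    have hc₁ : IsCompl (Submodule.span ℝ {z₁}) K₁.toSubmodule :=
      ⟨disjoint_iff.mpr hinfK₁, codisjoint_iff.mpr hsupK₁⟩
    have hc₂ : IsCompl (Submodule.span ℝ {z₂'}) K₂.toSubmodule := by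
      constructor
      · rw [disjoint_iff, eq_bot_iff]
        rintro u ⟨hu1, hu2⟩
        rcases Submodule.mem_span_singleton.mp hu1 with ⟨c, rfl⟩
        rcases eq_or_ne c 0 with rfl | hc
        · simp
        · exfalso
          apply hz₂'K
          have := K₂.toSubmodule.smul_mem c⁻¹ hu2
          rwa [smul_smul, inv_mul_cancel₀ hc, one_smul] at this
      · rw [codisjoint_iff, eq_top_iff, ← hsupK₂]
        apply sup_le
        · rw [Submodule.span_le, Set.singleton_subset_iff]
          have hz₂eq : z₂ = α⁻¹ • z₂' - α⁻¹ • (v : L₂) := by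
            rw [hz₂', smul_add, smul_smul, inv_mul_cancel₀ hα, one_smul]
            abel
          rw [hz₂eq]
          apply Submodule.sub_mem
          · exact Submodule.smul_mem _ _ (Submodule.mem_sup_left
              (Submodule.mem_span_singleton_self _))
          · exact Submodule.smul_mem _ _ (Submodule.mem_sup_right v.2)
        · exact le_sup_right
    -- the linear equivalence
    let τ : (Submodule.span ℝ {z₁} : Submodule ℝ L₁) ≃ₗ[ℝ]
        (Submodule.span ℝ {z₂'} : Submodule ℝ L₂) :=
      (LinearEquiv.toSpanNonzeroSingleton ℝ L₁ z₁ hz₁0).symm.trans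
        (LinearEquiv.toSpanNonzeroSingleton ℝ L₂ z₂' hz₂'0)
    let φ : L₁ ≃ₗ[ℝ] L₂ :=
      (Submodule.prodEquivOfIsCompl _ _ hc₁).symm ≪≫ₗ
        (LinearEquiv.prodCongr τ σ.toLinearEquiv ≪≫ₗ Submodule.prodEquivOfIsCompl _ _ hc₂)
    -- key formulas
    have hφz : φ z₁ = z₂' := by
      have h1 : (Submodule.prodEquivOfIsCompl _ _ hc₁).symm z₁
          = ((⟨z₁, Submodule.mem_span_singleton_self _⟩ : ↥(Submodule.span ℝ {z₁})), 0) := by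
        rw [LinearEquiv.symm_apply_eq, Submodule.coe_prodEquivOfIsCompl']
        simp
      show (Submodule.prodEquivOfIsCompl _ _ hc₂)
        ((LinearEquiv.prodCongr τ σ.toLinearEquiv) ((Submodule.prodEquivOfIsCompl _ _ hc₁).symm z₁)) = z₂'
      rw [h1]
      have h2 : (LinearEquiv.prodCongr τ σ.toLinearEquiv)
          ((⟨z₁, Submodule.mem_span_singleton_self _⟩ : ↥(Submodule.span ℝ {z₁})), (0 : ↥K₁))
          = (τ ⟨z₁, Submodule.mem_span_singleton_self _⟩, 0) := by
        have hσ0 : σ.toLinearEquiv 0 = 0 := map_zero _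
        simp [LinearEquiv.prodCongr_apply, hσ0]
      rw [h2]
      have h3 : τ ⟨z₁, Submodule.mem_span_singleton_self _⟩
          = ⟨z₂', Submodule.mem_span_singleton_self _⟩ := by
        show (LinearEquiv.toSpanNonzeroSingleton ℝ L₂ z₂' hz₂'0)
          ((LinearEquiv.toSpanNonzeroSingleton ℝ L₁ z₁ hz₁0).symm
            ⟨z₁, Submodule.mem_span_singleton_self _⟩) = _
        have h4 : (LinearEquiv.toSpanNonzeroSingleton ℝ L₁ z₁ hz₁0).symm
            ⟨z₁, Submodule.mem_span_singleton_self _⟩ = 1 := by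
          apply (LinearEquiv.toSpanNonzeroSingleton ℝ L₁ z₁ hz₁0).injective
          rw [LinearEquiv.apply_symm_apply, LinearEquiv.toSpanNonzeroSingleton_one]
        rw [h4, LinearEquiv.toSpanNonzeroSingleton_one]
      rw [h3]
      rw [Submodule.coe_prodEquivOfIsCompl']
      simp
    have hφk : ∀ k : ↥K₁, φ ↑k = ↑(σ k) := by
      intro k
      have h1 : (Submodule.prodEquivOfIsCompl _ _ hc₁).symm ↑k
          = (0, (⟨↑k, k.2⟩ : ↥(K₁.toSubmodule))) := by
        rw [LinearEquiv.symm_apply_eq, Submodule.coe_prodEquivOfIsCompl']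
        simp
      show (Submodule.prodEquivOfIsCompl _ _ hc₂)
        ((LinearEquiv.prodCongr τ σ.toLinearEquiv) ((Submodule.prodEquivOfIsCompl _ _ hc₁).symm ↑k)) = ↑(σ k)
      rw [h1]
      have h2 : (LinearEquiv.prodCongr τ σ.toLinearEquiv)
          ((0 : ↥(Submodule.span ℝ {z₁})), (⟨↑k, k.2⟩ : ↥(K₁.toSubmodule)))
          = (0, σ.toLinearEquiv ⟨↑k, k.2⟩) := by
        simp [LinearEquiv.prodCongr_apply]
      rw [h2, Submodule.coe_prodEquivOfIsCompl']
      simp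
    -- decomposition of elements of L₁
    have hdec : ∀ u : L₁, ∃ a : ℝ, ∃ k : ↥K₁, u = a • z₁ + ↑k := by
      intro u
      have : u ∈ Submodule.span ℝ {z₁} ⊔ K₁.toSubmodule := hsupK₁ ▸ Submodule.mem_top
      rcases Submodule.mem_sup.mp this with ⟨u1, hu1, w1, hw1, rfl⟩
      rcases Submodule.mem_span_singleton.mp hu1 with ⟨a, rfl⟩
      exact ⟨a, ⟨w1, hw1⟩, rfl⟩
    -- σ relation restated
    have hrel' : ∀ k : ↥K₁, φ ⁅z₁, (k : L₁)⁆ = ⁅z₂', ((σ k : ↥K₂) : L₂)⁆ := by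
      intro k
      have h0 : ⁅z₁, (k : L₁)⁆ = ↑(⟨⁅z₁, (k : L₁)⁆, K₁.lie_mem k.2⟩ : ↥K₁) := rfl
      rw [h0, hφk]
      rw [hrel k]
      rw [hz₂', add_lie, smul_lie]
    have hσbrkt : ∀ k k' : ↥K₁, φ ⁅(k : L₁), (k' : L₁)⁆
        = ⁅((σ k : ↥K₂) : L₂), ((σ k' : ↥K₂) : L₂)⁆ := by
      intro k k'
      have h0 : ⁅(k : L₁), (k' : L₁)⁆ = ↑(⁅k, k'⁆ : ↥K₁) := rfl
      rw [h0, hφk, σ.map_lie]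
      rfl
    -- the bracket property
    have hbrkt : ∀ u w : L₁, φ ⁅u, w⁆ = ⁅φ u, φ w⁆ := by
      intro u w
      rcases hdec u with ⟨a, k, rfl⟩
      rcases hdec w with ⟨a', k', rfl⟩
      have e1 : ⁅a • z₁ + ↑k, a' • z₁ + ↑k'⁆
          = (a' * a) • ⁅z₁, z₁⁆ + a • ⁅z₁, (↑k' : L₁)⁆ + (a' • ⁅(↑k : L₁), z₁⁆ + ⁅(↑k : L₁), (↑k' : L₁)⁆) := by
        simp only [add_lie, lie_add, smul_lie, lie_smul, smul_add, smul_smul]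
        abel
      have e1' : ⁅a • z₁ + ↑k, a' • z₁ + ↑k'⁆
          = a • ⁅z₁, (↑k' : L₁)⁆ - a' • ⁅z₁, (↑k : L₁)⁆ + ⁅(↑k : L₁), (↑k' : L₁)⁆ := by
        rw [e1, lie_self, smul_zero, zero_add, ← lie_skew z₁ (↑k : L₁)]
        module
      have e2 : φ (a • z₁ + ↑k) = a • z₂' + ↑(σ k) := by
        rw [map_add, map_smul, hφz, hφk]
      have e2' : φ (a' • z₁ + ↑k') = a' • z₂' + ↑(σ k') := by
        rw [map_add, map_smul, hφz, hφk]
      rw [e1', e2, e2']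
      rw [map_add, map_sub, map_smul, map_smul, hrel' k, hrel' k', hσbrkt k k']
      have e3 : ⁅a • z₂' + ↑(σ k), a' • z₂' + ↑(σ k')⁆
          = a • ⁅z₂', ((σ k' : ↥K₂) : L₂)⁆ - a' • ⁅z₂', ((σ k : ↥K₂) : L₂)⁆
            + ⁅((σ k : ↥K₂) : L₂), ((σ k' : ↥K₂) : L₂)⁆ := by
        have e4 : ⁅a • z₂' + ↑(σ k), a' • z₂' + ↑(σ k')⁆
            = (a' * a) • ⁅z₂', z₂'⁆ + a • ⁅z₂', ((σ k' : ↥K₂) : L₂)⁆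
              + (a' • ⁅((σ k : ↥K₂) : L₂), z₂'⁆ + ⁅((σ k : ↥K₂) : L₂), ((σ k' : ↥K₂) : L₂)⁆) := by
          simp only [add_lie, lie_add, smul_lie, lie_smul, smul_add, smul_smul]
          abel
        rw [e4, lie_self, smul_zero, zero_add, ← lie_skew z₂' ((σ k : ↥K₂) : L₂)]
        module
      rw [e3]
    -- assemble the Lie algebra equivalence
    exact ⟨{ toFun := φ,
             map_add' := φ.map_add,
             map_smul' := φ.map_smul,
             map_lie' := by intro u w; exact hbrkt u w,
             invFun := φ.symm,
             left_inv := φ.left_inv,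
             right_inv := φ.right_inv }⟩
end

section
/- Let n ≥ 2 and, for i = 1, 2, let Li be a solvable real Lie algebra with dim Li = n + 2 whose derived algebra Hi := [Li, Li] is nilpotent of dimension n, and let zi, yi ∈ Li be such that Li = ℝzi ⊕ ℝyi ⊕ Hi as vector spaces and [yi, x] = 0 for all x ∈ Hi. Set Ki := ℝyi ⊕ Hi. Then every Lie algebra isomorphism φ : L1 → L2 maps K1 onto K2. -/
open LieAlgebra

/-- Centralizer of a Lie ideal, as a submodule. -/
def centSub {L : Type} [LieRing L] [LieAlgebra ℝ L] (H : LieIdeal ℝ L) : Submodule ℝ L where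
  carrier := {x | ∀ h ∈ H, ⁅x, h⁆ = 0}
  add_mem' := fun {a b} ha hb h hh => by rw [add_lie, ha h hh, hb h hh, add_zero]
  zero_mem' := fun h _ => zero_lie h
  smul_mem' := fun c a ha h hh => by rw [smul_lie, ha h hh, smul_zero]

lemma mem_centSub {L : Type} [LieRing L] [LieAlgebra ℝ L] {H : LieIdeal ℝ L} {x : L} :
    x ∈ centSub H ↔ ∀ h ∈ H, ⁅x, h⁆ = 0 := Iff.rfl

/-- If a nilpotent Lie algebra is spanned by one element together with its derived algebra,
then it has dimension at most 1. -/
lemma nilp_dim_le_one (G : Type) [LieRing G] [LieAlgebra ℝ G]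
    (hnil : LieModule.IsNilpotent G G) (v : G)
    (hv : Submodule.span ℝ {v} ⊔ (LieAlgebra.derivedSeries ℝ G 1).toSubmodule = ⊤) :
    Module.finrank ℝ G ≤ 1 := by
  haveI := hnil
  set D : LieIdeal ℝ G := LieAlgebra.derivedSeries ℝ G 1 with hDdef
  have hD : D = ⁅(⊤ : LieIdeal ℝ G), (⊤ : LieIdeal ℝ G)⁆ := by
    rw [hDdef, LieAlgebra.derivedSeries_def, LieAlgebra.derivedSeriesOfIdeal_succ,
      LieAlgebra.derivedSeriesOfIdeal_zero]
  have hdec : ∀ x : G, ∃ a : ℝ, ∃ d ∈ D, x = a • v + d := by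
    intro x
    have hx : x ∈ Submodule.span ℝ {v} ⊔ D.toSubmodule := by rw [hv]; trivial
    obtain ⟨p, hp, d, hd, rfl⟩ := Submodule.mem_sup.1 hx
    obtain ⟨a, rfl⟩ := Submodule.mem_span_singleton.1 hp
    exact ⟨a, d, hd, rfl⟩
  have step : D ≤ ⁅(⊤ : LieIdeal ℝ G), D⁆ := by
    rw [← LieSubmodule.toSubmodule_le_toSubmodule]
    conv_lhs => rw [hD]
    rw [LieSubmodule.lieIdeal_oper_eq_linear_span']
    apply Submodule.span_le.2
    rintro _ ⟨x, -, m, -, rfl⟩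
    obtain ⟨a, d, hd, rfl⟩ := hdec x
    obtain ⟨c, e, he, rfl⟩ := hdec m
    have key : ⁅a • v + d, c • v + e⁆
        = a • ⁅v, e⁆ + (c • (-⁅v, d⁆) + ⁅d, e⁆) := by
      have hdv : ⁅d, v⁆ = -⁅v, d⁆ := by rw [← lie_skew v d, neg_neg]
      simp only [add_lie, lie_add, smul_lie, lie_smul, lie_self, smul_zero, zero_add,
        add_zero, hdv]
      abel
    rw [SetLike.mem_coe, LieSubmodule.mem_toSubmodule, key,
      ← LieSubmodule.mem_toSubmodule]
    refine Submodule.add_mem _ (Submodule.smul_mem _ _ ?_)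
      (Submodule.add_mem _ (Submodule.smul_mem _ _ (Submodule.neg_mem _ ?_)) ?_)
    · exact LieSubmodule.lie_mem_lie (LieSubmodule.mem_top v) he
    · exact LieSubmodule.lie_mem_lie (LieSubmodule.mem_top v) hd
    · exact LieSubmodule.lie_mem_lie (LieSubmodule.mem_top d) he
  have chain : ∀ k, D ≤ LieModule.lowerCentralSeries ℝ G G k := by
    intro k
    induction k with
    | zero => simp
    | succ k ih =>
      rw [LieModule.lowerCentralSeries_succ]
      exact le_trans step (LieSubmodule.mono_lie le_rfl ih)
  obtain ⟨k, hk⟩ := LieModule.IsNilpotent.nilpotent ℝ G G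
  have hDbot : D = ⊥ := le_bot_iff.1 (hk ▸ chain k)
  have hspan : Submodule.span ℝ {v} = ⊤ := by
    rw [← hv, hDbot]
    simp
  rcases eq_or_ne v 0 with rfl | hv0
  · have htb : (⊤ : Submodule ℝ G) = ⊥ := by
      rw [← hspan]; simp
    have hsub : Subsingleton G := by
      refine subsingleton_of_forall_eq 0 fun x => ?_
      have : x ∈ (⊥ : Submodule ℝ G) := htb ▸ Submodule.mem_top
      simpa using this
    simp [Module.finrank_zero_of_subsingleton]
  · have h1 : Module.finrank ℝ (Submodule.span ℝ ({v} : Set G)) = 1 :=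
      finrank_span_singleton hv0
    calc Module.finrank ℝ G = Module.finrank ℝ (⊤ : Submodule ℝ G) := (finrank_top ℝ G).symm
      _ = 1 := by rw [← hspan, h1]
      _ ≤ 1 := le_rfl

/-- The subspace `ℝy ⊕ H` coincides with `centralizer(H) + H`. -/
lemma keyK (L : Type) [LieRing L] [LieAlgebra ℝ L]
    (H : LieIdeal ℝ L) (hH : H = LieAlgebra.derivedSeries ℝ L 1)
    (hnil : LieModule.IsNilpotent ↥H ↥H)
    (hHdim : 2 ≤ Module.finrank ℝ ↥H)
    (z y : L)
    (hsup : Submodule.span ℝ {z} ⊔ Submodule.span ℝ {y} ⊔ H.toSubmodule = ⊤)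
    (hy : ∀ x ∈ H, ⁅y, x⁆ = 0) :
    centSub H ⊔ H.toSubmodule = Submodule.span ℝ {y} ⊔ H.toSubmodule := by
  have hsup' : Submodule.span ℝ {z} ⊔ (Submodule.span ℝ {y} ⊔ H.toSubmodule) = ⊤ := by
    rw [← sup_assoc]; exact hsup
  have hdec : ∀ x : L, ∃ a c : ℝ, ∃ h ∈ H, x = a • z + (c • y + h) := by
    intro x
    have hx : x ∈ (⊤ : Submodule ℝ L) := trivial
    rw [← hsup'] at hx
    obtain ⟨p, hp, q, hq, rfl⟩ := Submodule.mem_sup.1 hx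
    obtain ⟨a, rfl⟩ := Submodule.mem_span_singleton.1 hp
    obtain ⟨p', hp', h, hh, rfl⟩ := Submodule.mem_sup.1 hq
    obtain ⟨c, rfl⟩ := Submodule.mem_span_singleton.1 hp'
    exact ⟨a, c, h, hh, rfl⟩
  refine le_antisymm (sup_le ?_ le_sup_right) (sup_le ?_ le_sup_right)
  swap
  · refine Submodule.span_le.2 fun w hw => ?_
    rw [Set.mem_singleton_iff] at hw
    subst hw
    exact Submodule.mem_sup_left (mem_centSub.2 hy)
  intro x hx
  obtain ⟨a, c, h, hh, rfl⟩ := hdec x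
  rcases eq_or_ne a 0 with rfl | ha
  · rw [zero_smul, zero_add]
    exact Submodule.add_mem _
      (Submodule.mem_sup_left (Submodule.smul_mem _ _ (Submodule.mem_span_singleton_self _)))
      (Submodule.mem_sup_right ((LieSubmodule.mem_toSubmodule _).2 hh))
  · exfalso
    set D : LieIdeal ℝ L := ⁅H, H⁆ with hDdef
    have hzD : ∀ g ∈ H, ⁅z, g⁆ ∈ D := by
      intro g hg
      have h0 : ⁅a • z + (c • y + h), g⁆ = 0 := hx g hg
      have hhg : ⁅h, g⁆ ∈ D := LieSubmodule.lie_mem_lie hh hg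
      rw [add_lie, add_lie, smul_lie, smul_lie, hy g hg, smul_zero, zero_add] at h0
      have h1 : a • ⁅z, g⁆ = -⁅h, g⁆ := eq_neg_of_add_eq_zero_left h0
      have h2 : ⁅z, g⁆ = a⁻¹ • -⁅h, g⁆ := by
        rw [← h1, smul_smul, inv_mul_cancel₀ ha, one_smul]
      rw [h2, ← LieSubmodule.mem_toSubmodule]
      exact Submodule.smul_mem _ _
        (Submodule.neg_mem _ ((LieSubmodule.mem_toSubmodule _).2 hhg))
    have hvH : ⁅z, y⁆ ∈ H := by
      rw [hH, LieAlgebra.derivedSeries_def, LieAlgebra.derivedSeriesOfIdeal_succ,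
        LieAlgebra.derivedSeriesOfIdeal_zero]
      exact LieSubmodule.lie_mem_lie (LieSubmodule.mem_top z) (LieSubmodule.mem_top y)
    set M : Submodule ℝ L := Submodule.span ℝ {⁅z, y⁆} ⊔ D.toSubmodule with hM
    have hDM : ∀ u, u ∈ D → u ∈ M := fun u hu =>
      Submodule.mem_sup_right ((LieSubmodule.mem_toSubmodule _).2 hu)
    have hzw : ∀ w, ⁅z, w⁆ ∈ M := by
      intro w; obtain ⟨a', c', g, hg, rfl⟩ := hdec w
      have he : ⁅z, a' • z + (c' • y + g)⁆ = c' • ⁅z, y⁆ + ⁅z, g⁆ := by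
        simp [lie_add, lie_smul, lie_self]
      rw [he]
      exact Submodule.add_mem _
        (Submodule.mem_sup_left (Submodule.smul_mem _ _ (Submodule.mem_span_singleton_self _)))
        (hDM _ (hzD g hg))
    have hyw : ∀ w, ⁅y, w⁆ ∈ M := by
      intro w; obtain ⟨a', c', g, hg, rfl⟩ := hdec w
      have hyz : ⁅y, z⁆ = -⁅z, y⁆ := by rw [← lie_skew z y, neg_neg]
      have he : ⁅y, a' • z + (c' • y + g)⁆ = a' • ⁅y, z⁆ + ⁅y, g⁆ := by
        simp [lie_add, lie_smul, lie_self]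
      rw [he, hy g hg, add_zero, hyz]
      exact Submodule.mem_sup_left
        (Submodule.smul_mem _ _ (Submodule.neg_mem _ (Submodule.mem_span_singleton_self _)))
    have hgw : ∀ g ∈ H, ∀ w : L, ⁅g, w⁆ ∈ M := by
      intro g hg w
      have hsk : ⁅g, w⁆ = -⁅w, g⁆ := by rw [← lie_skew w g, neg_neg]
      rw [hsk]
      refine Submodule.neg_mem _ ?_
      obtain ⟨a', c', g', hg', rfl⟩ := hdec w
      have he : ⁅a' • z + (c' • y + g'), g⁆ = a' • ⁅z, g⁆ + (c' • ⁅y, g⁆ + ⁅g', g⁆) := by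
        simp [add_lie, smul_lie]
      rw [he, hy g hg, smul_zero, zero_add]
      exact Submodule.add_mem _ (Submodule.smul_mem _ _ (hDM _ (hzD g hg)))
        (hDM _ (LieSubmodule.lie_mem_lie hg' hg))
    have hbr : ∀ u w : L, ⁅u, w⁆ ∈ M := by
      intro u w
      obtain ⟨a', c', g, hg, rfl⟩ := hdec u
      have he : ⁅a' • z + (c' • y + g), w⁆ = a' • ⁅z, w⁆ + (c' • ⁅y, w⁆ + ⁅g, w⁆) := by
        simp [add_lie, smul_lie]
      rw [he]
      exact Submodule.add_mem _ (Submodule.smul_mem _ _ (hzw w))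
        (Submodule.add_mem _ (Submodule.smul_mem _ _ (hyw w)) (hgw g hg w))
    have hHM : H.toSubmodule ≤ M := by
      conv_lhs => rw [hH]
      rw [LieAlgebra.derivedSeries_def, LieAlgebra.derivedSeriesOfIdeal_succ,
        LieAlgebra.derivedSeriesOfIdeal_zero, LieSubmodule.lieIdeal_oper_eq_linear_span']
      apply Submodule.span_le.2
      rintro _ ⟨u, -, w, -, rfl⟩
      exact hbr u w
    have hD1 : LieAlgebra.derivedSeriesOfIdeal ℝ L 1 H = D := by
      rw [LieAlgebra.derivedSeriesOfIdeal_succ, LieAlgebra.derivedSeriesOfIdeal_zero]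
    set v : ↥H := ⟨⁅z, y⁆, hvH⟩ with hvdef
    have htop : Submodule.span ℝ {v} ⊔ (LieAlgebra.derivedSeries ℝ ↥H 1).toSubmodule = ⊤ := by
      rw [eq_top_iff]
      rintro ⟨g, hg⟩ -
      have hgM : g ∈ M := hHM ((LieSubmodule.mem_toSubmodule _).2 hg)
      obtain ⟨p, hp, d, hd, hpd⟩ := Submodule.mem_sup.1 hgM
      obtain ⟨c', rfl⟩ := Submodule.mem_span_singleton.1 hp
      have hdD : d ∈ D := (LieSubmodule.mem_toSubmodule _).1 hd
      have hdH : d ∈ H := LieSubmodule.lie_le_left H H hdD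
      refine Submodule.mem_sup.2 ⟨c' • v,
        Submodule.smul_mem _ _ (Submodule.mem_span_singleton_self v), ⟨d, hdH⟩, ?_, ?_⟩
      · rw [LieSubmodule.mem_toSubmodule,
          LieIdeal.derivedSeries_eq_derivedSeriesOfIdeal_comap, hD1]
        exact LieIdeal.mem_comap.2 (by simpa using hdD)
      · apply Subtype.ext
        simpa [hvdef] using hpd
    have hle := nilp_dim_le_one ↥H hnil v htop
    omega

/-- For `i = 1, 2`, let `Lᵢ` be a solvable real Lie algebra of dimension `n + 2` (`n ≥ 2`)
whose derived algebra `Hᵢ := [Lᵢ,Lᵢ]` is nilpotent of dimension `n`, with `zᵢ, yᵢ ∈ Lᵢ`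
such that `Lᵢ = ℝzᵢ ⊕ ℝyᵢ ⊕ Hᵢ` as vector spaces and `⁅yᵢ, Hᵢ⁆ = 0`; set
`Kᵢ := ℝyᵢ ⊕ Hᵢ`. Then every Lie algebra isomorphism `φ : L₁ → L₂` maps `K₁` onto `K₂`. -/
theorem stmt19 (n : ℕ) (hn : 2 ≤ n)
    (L₁ : Type) [LieRing L₁] [LieAlgebra ℝ L₁] [FiniteDimensional ℝ L₁]
    [LieAlgebra.IsSolvable L₁]
    (L₂ : Type) [LieRing L₂] [LieAlgebra ℝ L₂] [FiniteDimensional ℝ L₂]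
    [LieAlgebra.IsSolvable L₂]
    (hdim₁ : Module.finrank ℝ L₁ = n + 2) (hdim₂ : Module.finrank ℝ L₂ = n + 2)
    (H₁ : LieIdeal ℝ L₁) (hH₁ : H₁ = LieAlgebra.derivedSeries ℝ L₁ 1)
    (H₂ : LieIdeal ℝ L₂) (hH₂ : H₂ = LieAlgebra.derivedSeries ℝ L₂ 1)
    (hnil₁ : LieModule.IsNilpotent ↥H₁ ↥H₁) (hnil₂ : LieModule.IsNilpotent ↥H₂ ↥H₂)
    (hHdim₁ : Module.finrank ℝ ↥H₁ = n) (hHdim₂ : Module.finrank ℝ ↥H₂ = n)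
    (z₁ y₁ : L₁) (z₂ y₂ : L₂)
    (hsup₁ : Submodule.span ℝ {z₁} ⊔ Submodule.span ℝ {y₁} ⊔ H₁.toSubmodule = ⊤)
    (hzind₁ : Submodule.span ℝ {z₁} ⊓ (Submodule.span ℝ {y₁} ⊔ H₁.toSubmodule) = ⊥)
    (hyind₁ : Submodule.span ℝ {y₁} ⊓ H₁.toSubmodule = ⊥)
    (hsup₂ : Submodule.span ℝ {z₂} ⊔ Submodule.span ℝ {y₂} ⊔ H₂.toSubmodule = ⊤)
    (hzind₂ : Submodule.span ℝ {z₂} ⊓ (Submodule.span ℝ {y₂} ⊔ H₂.toSubmodule) = ⊥)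
    (hyind₂ : Submodule.span ℝ {y₂} ⊓ H₂.toSubmodule = ⊥)
    (hy₁ : ∀ x ∈ H₁, ⁅y₁, x⁆ = 0) (hy₂ : ∀ x ∈ H₂, ⁅y₂, x⁆ = 0) :
    ∀ φ : L₁ ≃ₗ⁅ℝ⁆ L₂,
      Submodule.map φ.toLieHom.toLinearMap (Submodule.span ℝ {y₁} ⊔ H₁.toSubmodule)
        = Submodule.span ℝ {y₂} ⊔ H₂.toSubmodule := by
  intro φ
  have hsurj : Function.Surjective φ.toLieHom := φ.surjective
  have hφH : (H₁.toSubmodule).map φ.toLieHom.toLinearMap = H₂.toSubmodule := by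
    have h1 : (LieAlgebra.derivedSeries ℝ L₁ 1).map φ.toLieHom
        = LieAlgebra.derivedSeries ℝ L₂ 1 := LieIdeal.derivedSeries_map_eq 1 hsurj
    rw [hH₁, hH₂, ← h1, LieIdeal.coe_map_of_surjective hsurj]
  have hmemH : ∀ x : L₁, x ∈ H₁ → φ x ∈ H₂ := by
    intro x hx
    rw [← LieSubmodule.mem_toSubmodule _, ← hφH]
    exact Submodule.mem_map_of_mem ((LieSubmodule.mem_toSubmodule _).2 hx)
  have hφC : (centSub H₁).map φ.toLieHom.toLinearMap = centSub H₂ := by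
    apply le_antisymm
    · rintro _ ⟨c, hc, rfl⟩
      intro h₂ hh₂
      have hh₂' : h₂ ∈ H₂.toSubmodule := (LieSubmodule.mem_toSubmodule _).2 hh₂
      rw [← hφH] at hh₂'
      obtain ⟨h₁, hh₁, rfl⟩ := Submodule.mem_map.1 hh₂'
      have : ⁅c, h₁⁆ = 0 := hc h₁ ((LieSubmodule.mem_toSubmodule _).1 hh₁)
      show ⁅φ.toLieHom c, φ.toLieHom h₁⁆ = 0
      rw [← LieHom.map_lie, this, map_zero]
    · intro c₂ hc₂
      refine ⟨φ.symm c₂, ?_, φ.apply_symm_apply c₂⟩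
      intro h hh
      apply φ.injective
      rw [map_zero]
      calc φ ⁅φ.symm c₂, h⁆ = ⁅φ (φ.symm c₂), φ h⁆ := φ.toLieHom.map_lie _ _
        _ = ⁅c₂, φ h⁆ := by rw [φ.apply_symm_apply]
        _ = 0 := hc₂ (φ h) (hmemH h hh)
  have hK₁ := keyK L₁ H₁ hH₁ hnil₁ (by omega) z₁ y₁ hsup₁ hy₁
  have hK₂ := keyK L₂ H₂ hH₂ hnil₂ (by omega) z₂ y₂ hsup₂ hy₂
  rw [← hK₁, Submodule.map_sup, hφC, hφH, hK₂]
end
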